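/- arXiv:0712.0920 — 5 statements merged into one kernel-verified Lean document; each statement's English description precedes it below -/
import Mathlib

section
/- For every finite simple graph G of order n, E(G) ≥ 2(n − χ(Ḡ)), where Ḡ is the complement of G and χ denotes the chromatic number. -/
open SimpleGraph Matrix Finset

/-- The eigenvalues (unordered, indexed by vertices) of the adjacency matrix of `G` over `ℝ`. -/
noncomputable def adjEigs {V : Type*} [Fintype V] [DecidableEq V] (G : SimpleGraph V) : V → ℝ := by
  classical
  exact (show ((G.adjMatrix ℝ)).IsHermitian from by
    rw [Matrix.IsHermitian, Matrix.conjTranspose_eq_transpose_of_trivial]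
    exact G.isSymm_adjMatrix).eigenvalues

/-- The energy of a graph: the sum of the absolute values of its adjacency eigenvalues. -/
noncomputable def energy {V : Type*} [Fintype V] [DecidableEq V] (G : SimpleGraph V) : ℝ :=
  ∑ i, |adjEigs G i|

/-- The adjacency eigenvalues of `G` sorted in nonincreasing order. -/
noncomputable def eigList {V : Type*} [Fintype V] [DecidableEq V] (G : SimpleGraph V) : List ℝ :=
  (Finset.univ.val.map (adjEigs G)).sort (· ≥ ·)

/-- `eig G i` is the `(i+1)`-st largest adjacency eigenvalue of `G` (0-indexed);
so `eig G 0 = λ₁(G)`, `eig G 1 = λ₂(G)`, etc. -/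
noncomputable def eig {V : Type*} [Fintype V] [DecidableEq V] (G : SimpleGraph V) (i : ℕ) : ℝ :=
  (eigList G).getD i 0

/-- `G` is `k`-choosable: for every assignment of lists of `k` colors to the vertices,
there is a proper coloring choosing each vertex's color from its list. -/
def Choosable {V : Type*} (G : SimpleGraph V) (k : ℕ) : Prop :=
  ∀ L : V → Finset ℕ, (∀ v, (L v).card = k) →
    ∃ c : V → ℕ, (∀ v, c v ∈ L v) ∧ ∀ ⦃u v⦄, G.Adj u v → c u ≠ c v

/-- The choice number (list chromatic number) of `G`. -/
noncomputable def choiceNumber {V : Type*} (G : SimpleGraph V) : ℕ :=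
  sInf {k | Choosable G k}

/-- The graph `2K₂`: two disjoint edges on four vertices. -/
def twoK2 : SimpleGraph (Fin 4) :=
  SimpleGraph.fromRel (fun u v => (u = 0 ∧ v = 1) ∨ (u = 2 ∧ v = 3))

/-- The graph `A_{n,t}`: `K_n` together with a new vertex joined to `t` of its vertices. -/
def Ant (n t : ℕ) : SimpleGraph (Fin (n + 1)) :=
  SimpleGraph.fromRel (fun u v => ((u : ℕ) < n ∧ (v : ℕ) < n) ∨ ((u : ℕ) = n ∧ (v : ℕ) < t))


lemma trace_mul_le_sum_abs_eigs {n : Type*} [Fintype n] [DecidableEq n]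
    {A : Matrix n n ℝ} (hA : A.IsHermitian) (Q : Matrix n n ℝ) (hQ : Q * Qᵀ = 1) :
    Matrix.trace (Q * A) ≤ ∑ i, |hA.eigenvalues i| := by
  classical
  set U : Matrix n n ℝ := (hA.eigenvectorUnitary : Matrix n n ℝ) with hU
  have hUmem : U ∈ Matrix.unitaryGroup n ℝ := hA.eigenvectorUnitary.2
  have hU1 : U * star U = 1 := (Matrix.mem_unitaryGroup_iff).mp hUmem
  have hU2 : star U * U = 1 := (Matrix.mem_unitaryGroup_iff').mp hUmem
  have hQstar : star Q = Qᵀ := Matrix.conjTranspose_eq_transpose_of_trivial Q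
  set M : Matrix n n ℝ := star U * Q * U with hM
  have hMM : M * star M = 1 := by
    have hsM : star M = star U * Qᵀ * U := by
      rw [hM, StarMul.star_mul, StarMul.star_mul, star_star, hQstar]; noncomm_ring
    rw [hM, hsM]
    calc star U * Q * U * (star U * Qᵀ * U)
        = star U * (Q * (U * star U) * Qᵀ) * U := by noncomm_ring
      _ = 1 := by rw [hU1, mul_one, hQ, mul_one, hU2]
  have hMbound : ∀ i, |M i i| ≤ 1 := by
    intro i
    have h1 : ∑ j, M i j * M i j = 1 := by
      have := congrFun (congrFun hMM i) i
      simpa [Matrix.mul_apply, Matrix.one_apply, Matrix.conjTranspose_apply] using this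
    have h2 : (M i i)^2 ≤ 1 := by
      rw [← h1, sq]
      exact Finset.single_le_sum (fun j _ => mul_self_nonneg (M i j)) (Finset.mem_univ i)
    exact (sq_le_one_iff_abs_le_one _).mp h2
  have htr : Matrix.trace (Q * A) = ∑ i, M i i * hA.eigenvalues i := by
    conv_lhs => rw [hA.spectral_theorem, Unitary.conjStarAlgAut_apply]
    have e1 : Q * ((hA.eigenvectorUnitary : Matrix n n ℝ) *
          Matrix.diagonal (RCLike.ofReal ∘ hA.eigenvalues) *
          star (hA.eigenvectorUnitary : Matrix n n ℝ))
        = (Q * U * Matrix.diagonal (RCLike.ofReal ∘ hA.eigenvalues)) * star U := by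
      rw [← hU]; noncomm_ring
    rw [e1, Matrix.trace_mul_comm, ← Matrix.mul_assoc, ← Matrix.mul_assoc, ← hM]
    simp [Matrix.trace, Matrix.mul_diagonal, Matrix.diag_apply, RCLike.ofReal]
  rw [htr]
  calc ∑ i, M i i * hA.eigenvalues i ≤ ∑ i, |M i i * hA.eigenvalues i| :=
        Finset.sum_le_sum fun i _ => le_abs_self _
    _ ≤ ∑ i, |hA.eigenvalues i| := by
        refine Finset.sum_le_sum fun i _ => ?_
        rw [abs_mul]
        exact mul_le_of_le_one_left (abs_nonneg _) (hMbound i)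

lemma aux1 (x : ℝ) (hx : x ≠ 0) : x * (2/x * (2/x)) = 2 * (2/x) := by field_simp
lemma aux2 (x : ℝ) (hx : x ≠ 0) : (x - 1) * (2/x) = 2 - 2/x := by field_simp

/-- `E(G) ≥ 2(n − χ(Ḡ))`. -/
theorem stmt1 {V : Type*} [Fintype V] [DecidableEq V] (G : SimpleGraph V) :
    energy G ≥ 2 * ((Fintype.card V : ℝ) - (Gᶜ.chromaticNumber.toNat : ℝ)) := by
  classical
  set k := Gᶜ.chromaticNumber.toNat with hkdef
  obtain ⟨C⟩ : Gᶜ.Colorable k := Gᶜ.colorable_chromaticNumber_of_fintype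
  set m : Fin k → ℕ := fun j => (Finset.univ.filter fun v => C v = j).card with hmdef
  have hmpos : ∀ v : V, 0 < m (C v) := fun v =>
    Finset.card_pos.mpr ⟨v, by simp [hmdef]⟩
  have hmne : ∀ v : V, ((m (C v) : ℝ)) ≠ 0 := fun v => by
    exact_mod_cast (hmpos v).ne'
  set a : Matrix V V ℝ :=
    Matrix.of (fun u v => if C u = C v then 2 / (m (C u) : ℝ) else 0) with hadef
  have ha_apply : ∀ u v, a u v = if C u = C v then 2 / (m (C u) : ℝ) else 0 := fun u v => rfl
  have ha_symm : aᵀ = a := by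
    ext u v
    simp only [Matrix.transpose_apply, ha_apply]
    by_cases h : C u = C v
    · rw [if_pos h, if_pos h.symm, h]
    · rw [if_neg h, if_neg (fun hh => h hh.symm)]
  -- a * a = 2 • a
  have haa : a * a = (2:ℝ) • a := by
    ext u v
    simp only [Matrix.mul_apply, Matrix.smul_apply, ha_apply, smul_eq_mul]
    by_cases h : C u = C v
    · rw [if_pos h]
      have step : ∀ w : V, (if C u = C w then 2 / (m (C u) : ℝ) else 0) *
          (if C w = C v then 2 / (m (C w) : ℝ) else 0)
          = if C w = C u then (2 / (m (C u) : ℝ)) * (2 / (m (C u) : ℝ)) else 0 := by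
        intro w
        by_cases hw : C w = C u
        · rw [if_pos hw.symm, if_pos (hw.trans h), if_pos hw, hw]
        · rw [if_neg (fun hh => hw hh.symm), zero_mul, if_neg hw]
      rw [Finset.sum_congr rfl fun w _ => step w, ← Finset.sum_filter, Finset.sum_const,
        nsmul_eq_mul]
      have hcard : (Finset.univ.filter fun w => C w = C u).card = m (C u) := rfl
      rw [hcard]
      exact aux1 _ (hmne u)
    · rw [if_neg h, mul_zero]
      refine Finset.sum_eq_zero fun w _ => ?_
      by_cases hw : C u = C w
      · rw [if_neg (fun hh => h (hw.trans hh)), mul_zero]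
      · rw [if_neg hw, zero_mul]
  set Q : Matrix V V ℝ := a - 1 with hQdef
  have hQT : Qᵀ = Q := by rw [hQdef, Matrix.transpose_sub, ha_symm, Matrix.transpose_one]
  have hQorth : Q * Qᵀ = 1 := by
    rw [hQT, hQdef]
    have : (a - 1) * (a - 1) = a * a - (2:ℝ) • a + 1 := by
      rw [two_smul]; noncomm_ring
    rw [this, haa, sub_self, zero_add]
  -- the adjacency matrix
  have hA : (G.adjMatrix ℝ).IsHermitian := by
    rw [Matrix.IsHermitian, Matrix.conjTranspose_eq_transpose_of_trivial]
    exact G.isSymm_adjMatrix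
  -- trace computation
  have hstep : ∀ u : V, ∑ w, a u w * (G.adjMatrix ℝ) w u = 2 - 2 / (m (C u) : ℝ) := by
    intro u
    have step : ∀ w : V, a u w * (G.adjMatrix ℝ) w u
        = if C w = C u then (if G.Adj w u then (2 / (m (C u) : ℝ)) else 0) else 0 := by
      intro w
      rw [ha_apply]
      by_cases hw : C w = C u
      · rw [if_pos hw.symm, if_pos hw, SimpleGraph.adjMatrix_apply]
        by_cases hadj : G.Adj w u
        · rw [if_pos hadj, if_pos hadj, mul_one]
        · rw [if_neg hadj, if_neg hadj, mul_zero]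
      · rw [if_neg (fun hh => hw hh.symm), zero_mul, if_neg hw]
    rw [Finset.sum_congr rfl fun w _ => step w, ← Finset.sum_filter]
    -- sum over the color class of u
    have humem : u ∈ Finset.univ.filter fun w => C w = C u := by simp
    rw [← Finset.sum_erase_add _ _ humem, if_neg (G.loopless.irrefl u), add_zero]
    have halladj : ∀ w ∈ (Finset.univ.filter fun w => C w = C u).erase u,
        (if G.Adj w u then (2 / (m (C u) : ℝ)) else 0) = 2 / (m (C u) : ℝ) := by
      intro w hw
      have hwne : w ≠ u := Finset.ne_of_mem_erase hw
      have hwc : C w = C u := by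
        have := Finset.mem_of_mem_erase hw
        simpa using this
      have hadj : G.Adj w u := by
        by_contra hnadj
        exact (C.valid (⟨hwne, hnadj⟩ : Gᶜ.Adj w u)) hwc
      rw [if_pos hadj]
    rw [Finset.sum_congr rfl halladj, Finset.sum_const, nsmul_eq_mul,
      Finset.card_erase_of_mem humem]
    have hcard : (Finset.univ.filter fun w => C w = C u).card = m (C u) := rfl
    rw [hcard, Nat.cast_sub (hmpos u), Nat.cast_one]
    exact aux2 _ (hmne u)
  have htrace : Matrix.trace (Q * (G.adjMatrix ℝ)) ≥ 2 * ((Fintype.card V : ℝ) - k) := by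
    have h1 : Matrix.trace (Q * (G.adjMatrix ℝ)) = Matrix.trace (a * (G.adjMatrix ℝ)) := by
      rw [hQdef, Matrix.sub_mul, Matrix.one_mul, Matrix.trace_sub,
        SimpleGraph.trace_adjMatrix, sub_zero]
    have h2 : Matrix.trace (a * (G.adjMatrix ℝ)) = ∑ u, (2 - 2 / (m (C u) : ℝ)) := by
      rw [Matrix.trace]
      refine Finset.sum_congr rfl fun u _ => ?_
      rw [Matrix.diag_apply, Matrix.mul_apply]
      exact hstep u
    rw [h1, h2, Finset.sum_sub_distrib, Finset.sum_const, nsmul_eq_mul, Finset.card_univ]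
    have h3 : ∑ u : V, 2 / (m (C u) : ℝ) ≤ 2 * k := by
      have h4 : ∑ u : V, 2 / (m (C u) : ℝ)
          = ∑ j : Fin k, ∑ u ∈ Finset.univ.filter fun u => C u = j, 2 / (m (C u) : ℝ) := by
        rw [Finset.sum_fiberwise_eq_sum_filter Finset.univ Finset.univ C
          (fun u => 2 / (m (C u) : ℝ))]
        simp
      rw [h4]
      calc ∑ j : Fin k, ∑ u ∈ Finset.univ.filter fun u => C u = j, 2 / (m (C u) : ℝ)
          ≤ ∑ j : Fin k, (2:ℝ) := by
            refine Finset.sum_le_sum fun j _ => ?_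
            have : ∀ u ∈ Finset.univ.filter fun u => C u = j,
                2 / (m (C u) : ℝ) = 2 / (m j : ℝ) := by
              intro u hu
              have : C u = j := by simpa using hu
              rw [this]
            rw [Finset.sum_congr rfl this, Finset.sum_const, nsmul_eq_mul]
            have hcard : ((Finset.univ.filter fun u => C u = j).card : ℝ) = (m j : ℝ) := rfl
            rw [hcard]
            rcases Nat.eq_zero_or_pos (m j) with h0 | hpos
            · simp [h0]
            · have hne : (m j : ℝ) ≠ 0 := by exact_mod_cast hpos.ne'
              rw [mul_comm, div_mul_cancel₀ (2:ℝ) hne]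
        _ = 2 * k := by rw [Finset.sum_const, nsmul_eq_mul, Finset.card_univ, Fintype.card_fin]; ring
    nlinarith [h3]
  have henergy : energy G = ∑ i, |hA.eigenvalues i| := rfl
  have := trace_mul_le_sum_abs_eigs hA Q hQorth
  rw [← henergy] at this
  linarith [htrace]
end

section
/- For every finite simple graph G of order n, the choice number satisfies ch(G) + ch(Ḡ) ≤ n + 1. -/
open SimpleGraph Matrix Finset

section Aux

variable {V : Type*}

lemma choosable_mono {G : SimpleGraph V} {k k' : ℕ} (h : Choosable G k) (hk : k ≤ k') :
    Choosable G k' := by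
  intro L hL
  have := fun v => Finset.exists_subset_card_eq (s := L v) (n := k) (by rw [hL v]; exact hk)
  choose L' hsub hcard using this
  obtain ⟨c, hc1, hc2⟩ := h L' hcard
  exact ⟨c, fun v => hsub v (hc1 v), hc2⟩

lemma choosable_card [Fintype V] (G : SimpleGraph V) :
    Choosable G (Fintype.card V) := by
  classical
  intro L hL
  have hall : ∀ s : Finset V, s.card ≤ (s.biUnion L).card := by
    intro s
    rcases s.eq_empty_or_nonempty with rfl | ⟨x, hx⟩
    · simp
    · calc s.card ≤ Fintype.card V := Finset.card_le_univ s
        _ = (L x).card := (hL x).symm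
        _ ≤ (s.biUnion L).card :=
            Finset.card_le_card (Finset.subset_biUnion_of_mem L hx)
  obtain ⟨c, hinj, hmem⟩ := (Finset.all_card_le_biUnion_card_iff_exists_injective L).mp hall
  exact ⟨c, hmem, fun u v huv h => G.ne_of_adj huv (hinj h)⟩

lemma choosable_choiceNumber [Fintype V] (G : SimpleGraph V) :
    Choosable G (choiceNumber G) := by
  have h : Fintype.card V ∈ {k | Choosable G k} := choosable_card G
  exact Nat.sInf_mem ⟨_, h⟩

lemma choiceNumber_le {G : SimpleGraph V} {k : ℕ} (h : Choosable G k) :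
    choiceNumber G ≤ k :=
  Nat.sInf_le h

lemma choiceNumber_empty [IsEmpty V] (G : SimpleGraph V) : choiceNumber G = 0 := by
  have : Choosable G 0 := fun L hL =>
    ⟨fun v => isEmptyElim v, fun v => isEmptyElim v, fun u v h => isEmptyElim u⟩
  exact Nat.eq_zero_of_le_zero (choiceNumber_le this)

lemma induce_compl (G : SimpleGraph V) (s : Set V) :
    (Gᶜ).induce s = (G.induce s)ᶜ := by
  ext a b
  simp [SimpleGraph.compl_adj, Subtype.ext_iff, ne_eq]

lemma choosable_of_delete [DecidableEq V] {G : SimpleGraph V} (v : V) {k : ℕ}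
    (h : Choosable (G.induce {w | w ≠ v}) k) : Choosable G (k + 1) := by
  intro L hL
  have hv : (L v).Nonempty := by rw [← Finset.card_pos, hL v]; omega
  obtain ⟨a, ha⟩ := hv
  have hsub : ∀ w : {w | w ≠ v}, ∃ t ⊆ ((L w).erase a), t.card = k := fun w =>
    Finset.exists_subset_card_eq (by
      have h1 : (L (w : V)).card - 1 ≤ ((L (w : V)).erase a).card :=
        Finset.pred_card_le_card_erase
      rw [hL] at h1; omega)
  choose L' hsub' hcard using hsub
  obtain ⟨c, hc1, hc2⟩ := h L' hcard
  refine ⟨fun w => if h : w = v then a else c ⟨w, h⟩, ?_, ?_⟩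
  · intro w
    by_cases hw : w = v
    · subst hw; simp [ha]
    · simp only [dif_neg hw]
      exact (Finset.erase_subset _ _) (hsub' ⟨w, hw⟩ (hc1 ⟨w, hw⟩))
  · intro u w huw hcc
    beta_reduce at hcc
    by_cases hu : u = v <;> by_cases hw : w = v
    · subst hu; subst hw; exact G.loopless.irrefl _ huw
    · subst hu; rw [dif_pos rfl, dif_neg hw] at hcc
      exact Finset.ne_of_mem_erase (hsub' ⟨w, hw⟩ (hc1 ⟨w, hw⟩)) hcc.symm
    · subst hw; rw [dif_neg hu, dif_pos rfl] at hcc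
      exact Finset.ne_of_mem_erase (hsub' ⟨u, hu⟩ (hc1 ⟨u, hu⟩)) hcc
    · rw [dif_neg hu, dif_neg hw] at hcc
      exact hc2 (show (G.induce {w | w ≠ v}).Adj ⟨u, hu⟩ ⟨w, hw⟩ from huw) hcc

lemma choosable_of_delete_deg [Fintype V] [DecidableEq V] {G : SimpleGraph V}
    [DecidableRel G.Adj] (v : V) {k : ℕ}
    (h : Choosable (G.induce {w | w ≠ v}) k) (hdeg : G.degree v + 1 ≤ k) :
    Choosable G k := by
  classical
  intro L hL
  obtain ⟨c, hc1, hc2⟩ := h (fun w => L w) (fun w => hL w)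
  set S : Finset ℕ :=
    (Finset.univ.filter (fun w : {w : V // w ≠ v} => G.Adj v w)).image (fun w => c w) with hS
  have hScard : S.card ≤ G.degree v := by
    calc S.card ≤ (Finset.univ.filter (fun w : {w : V // w ≠ v} => G.Adj v w)).card :=
          Finset.card_image_le
      _ ≤ (G.neighborFinset v).card := by
          apply Finset.card_le_card_of_injOn Subtype.val
          · intro w hw
            simp only [Finset.mem_coe, Finset.mem_filter] at hw
            simpa using hw.2
          · exact Subtype.val_injective.injOn
      _ = G.degree v := rfl
  have hlt : S.card < (L v).card := by rw [hL v]; omega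
  obtain ⟨a, ha, haS⟩ : ∃ a ∈ L v, a ∉ S := by
    by_contra hcon
    push_neg at hcon
    exact absurd (Finset.card_le_card hcon) (not_le.mpr hlt)
  refine ⟨fun w => if h : w = v then a else c ⟨w, h⟩, ?_, ?_⟩
  · intro w
    by_cases hw : w = v
    · subst hw; simpa using ha
    · simp only [dif_neg hw]; exact hc1 ⟨w, hw⟩
  · intro u w huw hcc
    beta_reduce at hcc
    by_cases hu : u = v <;> by_cases hw : w = v
    · subst hu; subst hw; exact G.loopless.irrefl _ huw
    · subst hu; rw [dif_pos rfl, dif_neg hw] at hcc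
      exact haS (hcc ▸ Finset.mem_image_of_mem _
        (Finset.mem_filter.mpr ⟨Finset.mem_univ _, huw⟩))
    · subst hw; rw [dif_neg hu, dif_pos rfl] at hcc
      exact haS (hcc ▸ Finset.mem_image_of_mem _
        (Finset.mem_filter.mpr ⟨Finset.mem_univ _, huw.symm⟩))
    · rw [dif_neg hu, dif_neg hw] at hcc
      exact hc2 (show (G.induce {w | w ≠ v}).Adj ⟨u, hu⟩ ⟨w, hw⟩ from huw) hcc

end Aux

universe u

lemma nordhaus_gaddum_key : ∀ (n : ℕ) {W : Type u} [Fintype W] (H : SimpleGraph W),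
    Fintype.card W ≤ n → choiceNumber H + choiceNumber Hᶜ ≤ Fintype.card W + 1 := by
  intro n
  induction n with
  | zero =>
    intro W _ H hcard
    have : IsEmpty W := Fintype.card_eq_zero_iff.mp (Nat.le_antisymm hcard (Nat.zero_le _))
    rw [choiceNumber_empty, choiceNumber_empty]
    omega
  | succ n ih =>
    intro W _ H hcard
    classical
    rcases isEmpty_or_nonempty W with hW | ⟨⟨v⟩⟩
    · rw [choiceNumber_empty, choiceNumber_empty]; omega
    · have hpos : 1 ≤ Fintype.card W := Fintype.card_pos_iff.mpr ⟨v⟩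
      set s : Set W := {w | w ≠ v} with hs
      have hcards : Fintype.card s = Fintype.card W - 1 := by
        have := Fintype.card_subtype_compl (fun w : W => w = v)
        rw [Fintype.card_subtype_eq] at this
        exact this
      set G' := H.induce s with hG'
      set a := choiceNumber G' with haa
      set b := choiceNumber G'ᶜ with hbb
      have hab : a + b ≤ Fintype.card W := by
        have := ih G' (by omega)
        omega
      set d := H.degree v with hd
      set d' := Hᶜ.degree v with hd'
      have hdd : d + d' = Fintype.card W - 1 := by
        have h1 : Hᶜ.degree v = Fintype.card W - 1 - H.degree v := H.degree_compl v
        have h2 : H.degree v < Fintype.card W := H.degree_lt_card_verts v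
        omega
      have hcompl : Choosable (Hᶜ.induce s) b := by
        rw [induce_compl]; exact choosable_choiceNumber _
      have h1 : choiceNumber H ≤ max a (d + 1) :=
        choiceNumber_le (choosable_of_delete_deg v
          (choosable_mono (choosable_choiceNumber G') (le_max_left _ _)) (le_max_right _ _))
      have h2 : choiceNumber H ≤ a + 1 :=
        choiceNumber_le (choosable_of_delete v (choosable_choiceNumber G'))
      have h3 : choiceNumber Hᶜ ≤ max b (d' + 1) :=
        choiceNumber_le (choosable_of_delete_deg v
          (choosable_mono hcompl (le_max_left _ _)) (le_max_right _ _))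
      have h4 : choiceNumber Hᶜ ≤ b + 1 :=
        choiceNumber_le (choosable_of_delete v hcompl)
      rcases le_or_gt (d + 1) a with hca | hca
      · rw [max_eq_left hca] at h1
        omega
      · rcases le_or_gt (d' + 1) b with hcb | hcb
        · rw [max_eq_left hcb] at h3
          omega
        · rw [max_eq_right (by omega)] at h1
          rw [max_eq_right (by omega)] at h3
          omega


/-- `ch(G) + ch(Ḡ) ≤ n + 1`. -/
theorem stmt3 {V : Type*} [Fintype V] (G : SimpleGraph V) :
    choiceNumber G + choiceNumber Gᶜ ≤ Fintype.card V + 1 :=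
  nordhaus_gaddum_key (Fintype.card V) G le_rfl
end

section
/- For every finite simple graph G, ch(G) ≤ λ₁(G) + 1, where λ₁(G) is the largest eigenvalue of the adjacency matrix of G and ch(G) is the choice number. -/
open SimpleGraph Matrix Finset

section Aux
variable {V : Type*} [Fintype V] [DecidableEq V]

lemma rayleigh_aux (A : Matrix V V ℝ) (hA : A.IsHermitian) (lam : ℝ)
    (hlam : ∀ i, hA.eigenvalues i ≤ lam) (x : V → ℝ) :
    x ⬝ᵥ (A *ᵥ x) ≤ lam * (x ⬝ᵥ x) := by
  set U : Matrix V V ℝ := (hA.eigenvectorUnitary : Matrix V V ℝ) with hU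
  set y : V → ℝ := star U *ᵥ x with hy
  have hst : star U = Uᵀ := conjTranspose_eq_transpose_of_trivial U
  have hx2 : x ⬝ᵥ x = y ⬝ᵥ y := by
    rw [hy, dotProduct_mulVec]
    congr 1
    rw [hst, ← mulVec_transpose, transpose_transpose, mulVec_mulVec, ← hst,
      (mem_unitaryGroup_iff).mp hA.eigenvectorUnitary.2, one_mulVec]
  have hAx : x ⬝ᵥ (A *ᵥ x) = ∑ i, hA.eigenvalues i * y i ^ 2 := by
    conv_lhs => rw [hA.spectral_theorem, Unitary.conjStarAlgAut_apply]
    rw [← mulVec_mulVec, ← mulVec_mulVec, ← hy, dotProduct_mulVec]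
    have hvm : x ᵥ* U = y := by
      rw [hy, hst, ← mulVec_transpose]
    rw [hvm]
    simp [dotProduct, mulVec_diagonal, Function.comp]
    exact Finset.sum_congr rfl fun i _ => by ring
  rw [hAx, hx2]
  have : lam * (y ⬝ᵥ y) = ∑ i, lam * (y i * y i) := by
    simp [dotProduct, Finset.mul_sum]
  rw [this]
  apply Finset.sum_le_sum
  intro i _
  nlinarith [hlam i, sq_nonneg (y i)]

lemma eig0_ge [Nonempty V] (G : SimpleGraph V) (i : V) :
    adjEigs G i ≤ eig G 0 := by
  have hmem : adjEigs G i ∈ eigList G := by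
    rw [eigList, Multiset.mem_sort]
    exact Multiset.mem_map_of_mem _ (Finset.mem_univ_val i)
  have hsorted : (eigList G).Pairwise (· ≥ ·) := Multiset.pairwise_sort _ _
  rw [eig]
  cases h : eigList G with
  | nil => rw [h] at hmem; simp at hmem
  | cons a t =>
    rw [h] at hmem hsorted
    rcases List.mem_cons.mp hmem with h1 | h1
    · simp [h1]
    · simpa using List.rel_of_pairwise_cons hsorted h1

/-- Every nonempty subset contains a vertex with few neighbors inside it. -/
lemma exists_low_deg [Nonempty V] (G : SimpleGraph V) (S : Finset V) (hS : S.Nonempty) :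
    ∃ v ∈ S, ({u ∈ (S : Set V) | G.Adj v u}.ncard : ℝ) ≤ eig G 0 := by
  classical
  by_contra hcon
  push_neg at hcon
  have hA : (G.adjMatrix ℝ).IsHermitian := by
    rw [Matrix.IsHermitian, Matrix.conjTranspose_eq_transpose_of_trivial]
    exact G.isSymm_adjMatrix
  have hEig : adjEigs G = hA.eigenvalues := rfl
  have hcard : ∀ v : V, {u ∈ (S : Set V) | G.Adj v u}.ncard
      = (S.filter (fun u => G.Adj v u)).card := by
    intro v
    rw [← Set.ncard_coe_finset]
    congr 1
    ext u
    simp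
  simp only [hcard] at hcon
  set x : V → ℝ := fun v => if v ∈ S then 1 else 0 with hx
  have hray := rayleigh_aux (G.adjMatrix ℝ) hA (eig G 0)
    (fun i => hEig ▸ eig0_ge G i) x
  have hxx : x ⬝ᵥ x = (S.card : ℝ) := by
    simp [hx, dotProduct, ite_and]
  have hterm : ∀ v : V, x v * ((G.adjMatrix ℝ) *ᵥ x) v
      = if v ∈ S then ((S.filter (fun u => G.Adj v u)).card : ℝ) else 0 := by
    intro v
    by_cases hv : v ∈ S
    · simp only [hx, if_pos hv, one_mul, mulVec, dotProduct, SimpleGraph.adjMatrix_apply]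
      have h1 : ∀ u, (if G.Adj v u then (1:ℝ) else 0) * (if u ∈ S then 1 else 0)
          = if u ∈ S then (if G.Adj v u then (1:ℝ) else 0) else 0 := fun u => by
        by_cases h1 : G.Adj v u <;> by_cases h2 : u ∈ S <;> simp [h1, h2]
      rw [Finset.sum_congr rfl (fun u _ => h1 u), Finset.sum_ite_mem, Finset.univ_inter,
        Finset.sum_boole]
    · simp [hx, hv]
  have hxAx : x ⬝ᵥ ((G.adjMatrix ℝ) *ᵥ x)
      = ∑ v ∈ S, ((S.filter (fun u => G.Adj v u)).card : ℝ) := by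
    rw [dotProduct, Finset.sum_congr rfl (fun v _ => hterm v),
      Finset.sum_ite_mem, Finset.univ_inter]
  have hlt : (eig G 0) * (S.card : ℝ) < ∑ v ∈ S, ((S.filter (fun u => G.Adj v u)).card : ℝ) := by
    have := Finset.sum_lt_sum_of_nonempty hS
      (f := fun _ => eig G 0)
      (g := fun v => ((S.filter (fun u => G.Adj v u)).card : ℝ))
      (fun v hv => hcon v hv)
    simpa [Finset.sum_const, nsmul_eq_mul, mul_comm] using this
  rw [hxAx, hxx] at hray
  linarith

end Aux

section Aux2
variable {V : Type*} [Fintype V] [DecidableEq V]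

lemma choosable_of_lt [Nonempty V] (G : SimpleGraph V) (k : ℕ) (hk : eig G 0 < k) :
    Choosable G k := by
  classical
  intro L hL
  have key : ∀ S : Finset V, ∃ c : V → ℕ, (∀ w ∈ S, c w ∈ L w) ∧
      ∀ u ∈ S, ∀ w ∈ S, G.Adj u w → c u ≠ c w := by
    intro S
    induction S using Finset.strongInduction with
    | _ S ih =>
      rcases S.eq_empty_or_nonempty with rfl | hS
      · exact ⟨fun _ => 0, by simp, by simp⟩
      · obtain ⟨v, hvS, hdeg⟩ := exists_low_deg G S hS
        have hcard : {u ∈ (S : Set V) | G.Adj v u}.ncard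
            = (S.filter (fun u => G.Adj v u)).card := by
          rw [← Set.ncard_coe_finset]; congr 1; ext u; simp
        rw [hcard] at hdeg
        have hdlt : (S.filter (fun u => G.Adj v u)).card < k := by
          by_contra h
          push_neg at h
          have : (k : ℝ) ≤ ((S.filter (fun u => G.Adj v u)).card : ℝ) := by exact_mod_cast h
          linarith
        obtain ⟨c', hc'1, hc'2⟩ := ih (S.erase v) (Finset.erase_ssubset hvS)
        set N : Finset V := (S.erase v).filter (fun u => G.Adj v u) with hN
        have hNsub : N ⊆ S.filter (fun u => G.Adj v u) :=
          Finset.filter_subset_filter _ (Finset.erase_subset _ _)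
        have hNcard : (N.image c').card < k :=
          lt_of_le_of_lt Finset.card_image_le (lt_of_le_of_lt (Finset.card_le_card hNsub) hdlt)
        have hne : (L v \ N.image c').Nonempty := by
          rw [Finset.sdiff_nonempty]
          intro hsub
          have := Finset.card_le_card hsub
          rw [hL v] at this
          omega
        obtain ⟨a, ha⟩ := hne
        rw [Finset.mem_sdiff] at ha
        refine ⟨Function.update c' v a, ?_, ?_⟩
        · intro w hw
          by_cases hwv : w = v
          · subst hwv; simpa using ha.1
          · rw [Function.update_of_ne hwv]
            exact hc'1 w (Finset.mem_erase.mpr ⟨hwv, hw⟩)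
        · intro u hu w hw hadj
          by_cases huv : u = v
          · subst huv
            have hwv : w ≠ u := fun h => G.ne_of_adj hadj h.symm
            rw [Function.update_self, Function.update_of_ne hwv]
            intro h
            exact ha.2 (Finset.mem_image.mpr ⟨w,
              Finset.mem_filter.mpr ⟨Finset.mem_erase.mpr ⟨hwv, hw⟩, hadj⟩, h.symm⟩)
          · by_cases hwv : w = v
            · subst hwv
              rw [Function.update_self, Function.update_of_ne huv]
              intro h
              exact ha.2 (Finset.mem_image.mpr ⟨u,
                Finset.mem_filter.mpr ⟨Finset.mem_erase.mpr ⟨huv, hu⟩, hadj.symm⟩, h⟩)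
            · rw [Function.update_of_ne huv, Function.update_of_ne hwv]
              exact hc'2 u (Finset.mem_erase.mpr ⟨huv, hu⟩) w (Finset.mem_erase.mpr ⟨hwv, hw⟩) hadj
  obtain ⟨c, h1, h2⟩ := key Finset.univ
  exact ⟨c, fun v => h1 v (Finset.mem_univ v),
    fun u w hadj => h2 u (Finset.mem_univ u) w (Finset.mem_univ w) hadj⟩

end Aux2


/-- `ch(G) ≤ λ₁(G) + 1`. -/
theorem stmt4 {V : Type*} [Fintype V] [DecidableEq V] [Nonempty V] (G : SimpleGraph V) :
    (choiceNumber G : ℝ) ≤ eig G 0 + 1 := by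
  have h0 : (0 : ℝ) ≤ eig G 0 := by
    obtain ⟨v⟩ := (inferInstance : Nonempty V)
    obtain ⟨w, _, hle⟩ := exists_low_deg G {v} ⟨v, Finset.mem_singleton_self v⟩
    exact le_trans (Nat.cast_nonneg _) hle
  set k := ⌊eig G 0⌋₊ + 1 with hk
  have hlt : eig G 0 < (k : ℝ) := by
    rw [hk]
    push_cast
    exact Nat.lt_floor_add_one _
  have hch : choiceNumber G ≤ k := Nat.sInf_le (choosable_of_lt G k hlt)
  calc (choiceNumber G : ℝ) ≤ (k : ℝ) := by exact_mod_cast hch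
    _ = (⌊eig G 0⌋₊ : ℝ) + 1 := by rw [hk]; push_cast; ring
    _ ≤ eig G 0 + 1 := by linarith [Nat.floor_le h0]
end

section
/- The energy of the complete bipartite graph K_{2,4} satisfies E(K_{2,4}) = 4√2 < 6 = 2·ch(K_{2,4}), i.e., K_{2,4} has energy strictly less than twice its choice number. -/
open SimpleGraph Matrix Finset

open Matrix in
private lemma auxSumSqEigs {n : Type*} [Fintype n] [DecidableEq n]
    {A : Matrix n n ℝ} (hA : A.IsHermitian) :
    ∑ i, hA.eigenvalues i ^ 2 = (A * A).trace := by
  have hU : (hA.eigenvectorUnitary : Matrix n n ℝ) ∈ Matrix.unitaryGroup n ℝ :=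
    hA.eigenvectorUnitary.2
  have hs := hA.spectral_theorem
  set U := (hA.eigenvectorUnitary : Matrix n n ℝ)
  set D := Matrix.diagonal (RCLike.ofReal ∘ hA.eigenvalues : n → ℝ)
  have h1 : star U * U = 1 := (Matrix.mem_unitaryGroup_iff').mp hU
  calc ∑ i, hA.eigenvalues i ^ 2 = (D * D).trace := by
        simp [D, Matrix.diagonal_mul_diagonal, Matrix.trace, Matrix.diag, sq]
    _ = (A * A).trace := by
        rw [hs, Unitary.conjStarAlgAut_apply]
        rw [show U * D * star U * (U * D * star U) = U * (D * D) * star U by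
          rw [show U * D * star U * (U * D * star U) = U * D * (star U * U) * (D * star U) from by
            noncomm_ring, h1, mul_one]; noncomm_ring]
        rw [Matrix.trace_mul_cycle, ← mul_assoc, h1, one_mul]

open Matrix in
private lemma auxEigCube {n : Type*} [Fintype n] [DecidableEq n]
    {A : Matrix n n ℝ} (hA : A.IsHermitian) (h : A * A * A = (8:ℝ) • A) (i : n) :
    hA.eigenvalues i ^ 3 = 8 * hA.eigenvalues i := by
  have hU : (hA.eigenvectorUnitary : Matrix n n ℝ) ∈ Matrix.unitaryGroup n ℝ :=
    hA.eigenvectorUnitary.2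
  have hs := hA.spectral_theorem
  set U := (hA.eigenvectorUnitary : Matrix n n ℝ)
  set D := Matrix.diagonal (RCLike.ofReal ∘ hA.eigenvalues : n → ℝ)
  have h1 : star U * U = 1 := (Matrix.mem_unitaryGroup_iff').mp hU
  have h2 : U * star U = 1 := (Matrix.mem_unitaryGroup_iff).mp hU
  have hD : D * D * D = (8:ℝ) • D := by
    have e1 : A * A * A = U * (D * D * D) * star U := by
      rw [hs, Unitary.conjStarAlgAut_apply]
      rw [show U * D * star U * (U * D * star U) * (U * D * star U)
          = U * D * (star U * U) * D * (star U * U) * (D * star U) from by noncomm_ring, h1]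
      noncomm_ring
    have e2 : (8:ℝ) • A = U * ((8:ℝ) • D) * star U := by
      rw [hs, Unitary.conjStarAlgAut_apply]; rw [Matrix.mul_smul, Matrix.smul_mul]
    have cancel : ∀ X Y : Matrix n n ℝ, U * X * star U = U * Y * star U → X = Y := by
      intro X Y hXY
      have h' := congrArg (fun M => star U * M * U) hXY
      simp only [Matrix.mul_assoc] at h'
      simp only [h1, Matrix.mul_one] at h'
      simp only [← Matrix.mul_assoc] at h'
      simpa only [h1, Matrix.one_mul] using h'
    exact cancel _ _ (by rw [← e1, ← e2]; exact h)
  have := congrFun (congrFun hD i) i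
  simpa [D, Matrix.mul_apply, Matrix.diagonal, pow_succ, sq, mul_assoc] using this

private abbrev Gkb := completeBipartiteGraph (Fin 2) (Fin 4)

private lemma auxTrace (inst : DecidableRel Gkb.Adj) :
    ((Gkb.adjMatrix ℝ) * (Gkb.adjMatrix ℝ)).trace = 16 := by
  simp [Matrix.trace, Matrix.mul_apply, Fintype.sum_sum_type, SimpleGraph.adjMatrix_apply,
    Matrix.diag]
  norm_num

private lemma auxCube (inst : DecidableRel Gkb.Adj) :
    (Gkb.adjMatrix ℝ) * (Gkb.adjMatrix ℝ) * (Gkb.adjMatrix ℝ) = (8:ℝ) • (Gkb.adjMatrix ℝ) := by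
  ext i l
  cases i <;> cases l <;>
    simp [Matrix.mul_apply, Fintype.sum_sum_type, SimpleGraph.adjMatrix_apply] <;> norm_num

private lemma choos3 : Choosable Gkb 3 := by
  intro L hL
  have ha : (L (Sum.inl 0)).Nonempty := by rw [← Finset.card_pos, hL]; norm_num
  have hb : (L (Sum.inl 1)).Nonempty := by rw [← Finset.card_pos, hL]; norm_num
  obtain ⟨a, ha⟩ := ha
  obtain ⟨b, hb⟩ := hb
  have hr : ∀ v : Fin 4, (L (Sum.inr v) \ {a, b}).Nonempty := by
    intro v
    rw [← Finset.card_pos]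
    have h1 := Finset.le_card_sdiff ({a, b} : Finset ℕ) (L (Sum.inr v))
    have h2 : ({a, b} : Finset ℕ).card ≤ 2 := Finset.card_insert_le _ _ |>.trans (by simp)
    have h3 := hL (Sum.inr v)
    omega
  choose f hf using hr
  refine ⟨Sum.elim (fun i => if i = 0 then a else b) f, ?_, ?_⟩
  · rintro (i | v)
    · fin_cases i <;> simp [ha, hb]
    · exact (Finset.mem_sdiff.mp (hf v)).1
  · rintro (i | v) (j | w) hadj <;> simp_all
    · have h1 := (hf w).2.1; have h2 := (hf w).2.2
      split <;> intro h <;> [exact h1 h.symm; exact h2 h.symm]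
    · have h1 := (hf v).2.1; have h2 := (hf v).2.2
      split <;> [exact h1; exact h2]

private lemma nchoos2 : ¬ Choosable Gkb 2 := by
  intro h
  obtain ⟨c, hmem, hadj⟩ := h (Sum.elim (fun i => if i = 0 then {1, 2} else {3, 4})
    (fun v => if v = 0 then {1, 3} else if v = 1 then {1, 4} else if v = 2 then {2, 3}
      else {2, 4}))
    (by rintro (i | v) <;> [fin_cases i; fin_cases v] <;> simp)
  have ha := hmem (Sum.inl 0); have hb := hmem (Sum.inl 1)
  simp only [Sum.elim_inl, if_pos, if_neg, Finset.mem_insert, Finset.mem_singleton] at ha hb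
  norm_num at ha hb
  have adj : ∀ v : Fin 4, Gkb.Adj (Sum.inl 0) (Sum.inr v) ∧ Gkb.Adj (Sum.inl 1) (Sum.inr v) := by
    intro v; constructor <;> simp
  rcases ha with ha | ha <;> rcases hb with hb | hb
  · have h0 := hmem (Sum.inr 0)
    have n1 := hadj (adj 0).1; have n2 := hadj (adj 0).2
    simp [ha, hb] at h0 n1 n2; omega
  · have h0 := hmem (Sum.inr 1)
    have n1 := hadj (adj 1).1; have n2 := hadj (adj 1).2
    simp [ha, hb] at h0 n1 n2; omega
  · have h0 := hmem (Sum.inr 2)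
    have n1 := hadj (adj 2).1; have n2 := hadj (adj 2).2
    simp [ha, hb] at h0 n1 n2; omega
  · have h0 := hmem (Sum.inr 3)
    have n1 := hadj (adj 3).1; have n2 := hadj (adj 3).2
    simp [ha, hb] at h0 n1 n2; omega

private lemma nchoos1 : ¬ Choosable Gkb 1 := by
  intro h
  obtain ⟨c, hmem, hadj⟩ := h (fun _ => {1}) (by simp)
  have h1 := hmem (Sum.inl 0); have h2 := hmem (Sum.inr 0)
  simp at h1 h2
  exact hadj (by simp : Gkb.Adj (Sum.inl 0) (Sum.inr 0)) (h1.trans h2.symm)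

private lemma nchoos0 : ¬ Choosable Gkb 0 := by
  intro h
  obtain ⟨c, hmem, -⟩ := h (fun _ => ∅) (by simp)
  simpa using hmem (Sum.inl 0)

private lemma auxChoiceNum : choiceNumber Gkb = 3 := by
  refine le_antisymm (Nat.sInf_le choos3) (le_csInf ⟨3, choos3⟩ ?_)
  intro k hk
  by_contra hlt
  push_neg at hlt
  interval_cases k
  · exact nchoos0 hk
  · exact nchoos1 hk
  · exact nchoos2 hk

/-- `E(K_{2,4}) = 4√2 < 6 = 2 ch(K_{2,4})`. -/
theorem stmt13 :
    energy (completeBipartiteGraph (Fin 2) (Fin 4)) = 4 * Real.sqrt 2 ∧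
    4 * Real.sqrt 2 < 6 ∧
    (6 : ℝ) = 2 * (choiceNumber (completeBipartiteGraph (Fin 2) (Fin 4)) : ℝ) := by
  classical
  have sqrt2_lt : Real.sqrt 2 < 1.5 := by
    nlinarith [Real.sq_sqrt (by norm_num : (0:ℝ) ≤ 2), Real.sqrt_nonneg 2]
  refine ⟨?_, by nlinarith [Real.sqrt_nonneg 2], by rw [auxChoiceNum]; norm_num⟩
  have hA : ((Gkb.adjMatrix ℝ)).IsHermitian := by
    rw [Matrix.IsHermitian, Matrix.conjTranspose_eq_transpose_of_trivial]
    exact Gkb.isSymm_adjMatrix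
  have heq : adjEigs Gkb = hA.eigenvalues := rfl
  have htr : ∑ i, hA.eigenvalues i ^ 2 = 16 := (auxSumSqEigs hA).trans (auxTrace _)
  have hcube := auxEigCube hA (auxCube _)
  have habs : ∀ i, |hA.eigenvalues i| = hA.eigenvalues i ^ 2 * (Real.sqrt 2 / 4) := by
    intro i
    have h := hcube i
    have hd : hA.eigenvalues i = 0 ∨ hA.eigenvalues i ^ 2 = 8 := by
      rcases mul_eq_zero.mp (show hA.eigenvalues i * (hA.eigenvalues i ^ 2 - 8) = 0 by
        nlinarith [h]) with h' | h'
      exacts [Or.inl h', Or.inr (by linarith)]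
    rcases hd with h' | h'
    · simp [h']
    · have h8 : |hA.eigenvalues i| = Real.sqrt 8 := by
        rw [← Real.sqrt_sq_eq_abs, h']
      rw [h8, h', show (8:ℝ) = 2 ^ 2 * 2 by norm_num,
        Real.sqrt_mul (by positivity), Real.sqrt_sq (by norm_num)]
      ring
  have : energy Gkb = ∑ i, |hA.eigenvalues i| := by rw [energy, heq]
  rw [this]
  rw [Finset.sum_congr rfl (fun i _ => habs i), ← Finset.sum_mul, htr]
  ring
end

section
/- If a finite simple graph G contains the 5-cycle C₅ as an induced subgraph, then E(G) > 2·ch(G). -/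
open SimpleGraph Matrix Finset

set_option linter.unusedSectionVars false
set_option maxHeartbeats 1000000

/-! ### Auxiliary spectral lemmas -/

section Spectral
variable {V : Type*} [Fintype V] [DecidableEq V] {A : Matrix V V ℝ} (hA : A.IsHermitian)

lemma inner_eq_dot' (x y : EuclideanSpace ℝ V) : (inner ℝ x y : ℝ) = (x : V → ℝ) ⬝ᵥ y := by
  simp [PiLp.inner_apply, RCLike.inner_apply, dotProduct, mul_comm]

lemma repr_mulVec' (x : EuclideanSpace ℝ V) (i : V) :
    hA.eigenvectorBasis.repr (WithLp.toLp 2 (A *ᵥ x)) i = hA.eigenvalues i * hA.eigenvectorBasis.repr x i := by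
  have hsymm : Aᵀ = A := by rw [← Matrix.conjTranspose_eq_transpose_of_trivial]; exact hA
  rw [hA.eigenvectorBasis.repr_apply_apply, hA.eigenvectorBasis.repr_apply_apply,
    inner_eq_dot', inner_eq_dot']
  rw [Matrix.dotProduct_mulVec, ← Matrix.mulVec_transpose, hsymm]
  erw [hA.mulVec_eigenvectorBasis, smul_dotProduct]
  rfl

lemma dot_mulVec_eq_sum' (x : EuclideanSpace ℝ V) :
    (x : V → ℝ) ⬝ᵥ (A *ᵥ x) =
      ∑ i, hA.eigenvalues i * (hA.eigenvectorBasis.repr x i)^2 := by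
  rw [← inner_eq_dot' x (WithLp.toLp 2 (A *ᵥ x)), ← hA.eigenvectorBasis.repr.inner_map_map x (WithLp.toLp 2 (A *ᵥ x))]
  rw [inner_eq_dot']
  simp only [dotProduct]
  refine Finset.sum_congr rfl fun i _ => ?_
  rw [repr_mulVec' hA x i]
  ring

lemma dot_self_eq_sum' (x : EuclideanSpace ℝ V) :
    (x : V → ℝ) ⬝ᵥ x = ∑ i, (hA.eigenvectorBasis.repr x i)^2 := by
  rw [← inner_eq_dot' x x, ← hA.eigenvectorBasis.repr.inner_map_map x x, inner_eq_dot']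
  simp [dotProduct, sq]

lemma rayleigh_le' {M : ℝ} (hM : ∀ i, hA.eigenvalues i ≤ M) (x : EuclideanSpace ℝ V) :
    (x : V → ℝ) ⬝ᵥ (A *ᵥ x) ≤ M * ((x : V → ℝ) ⬝ᵥ x) := by
  rw [dot_mulVec_eq_sum' hA, dot_self_eq_sum' hA, Finset.mul_sum]
  exact Finset.sum_le_sum fun i _ => mul_le_mul_of_nonneg_right (hM i) (sq_nonneg _)

lemma sum_eigenvalues_eq_trace' : A.trace = ∑ i, hA.eigenvalues i := by
  rw [hA.trace_eq_sum_eigenvalues]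
  simp

lemma three_eigenvalues_ge' {c : ℝ} (y : Fin 3 → EuclideanSpace ℝ V)
    (hy : LinearIndependent ℝ y)
    (hray : ∀ x ∈ Submodule.span ℝ (Set.range y),
      c * ((x : V → ℝ) ⬝ᵥ x) ≤ (x : V → ℝ) ⬝ᵥ (A *ᵥ x)) :
    3 ≤ (Finset.univ.filter (fun i => c ≤ hA.eigenvalues i)).card := by
  by_contra hcon
  push_neg at hcon
  set B := hA.eigenvectorBasis with hB
  set s : Finset V := Finset.univ.filter (fun i => hA.eigenvalues i < c) with hs
  have hscard : Fintype.card V - 2 ≤ s.card := by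
    have := Finset.card_filter_add_card_filter_not
      (s := (Finset.univ : Finset V)) (p := fun i => c ≤ hA.eigenvalues i)
    have hsc : s.card = (Finset.univ.filter (fun i => ¬ c ≤ hA.eigenvalues i)).card := by
      congr 1; ext i; simp [hs, not_le]
    rw [Finset.card_univ] at this
    omega
  set U : Submodule ℝ (EuclideanSpace ℝ V) :=
    Submodule.span ℝ (Set.range (fun i : {i // i ∈ s} => (B i : EuclideanSpace ℝ V))) with hU
  set W : Submodule ℝ (EuclideanSpace ℝ V) := Submodule.span ℝ (Set.range y) with hW
  have hUrank : Module.finrank ℝ U = s.card := by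
    rw [hU, finrank_span_eq_card]
    · simp [Fintype.card_coe]
    · exact (B.orthonormal.comp _ Subtype.val_injective).linearIndependent
  have hWrank : Module.finrank ℝ W = 3 := by
    rw [hW, finrank_span_eq_card hy, Fintype.card_fin]
  have hinf : 1 ≤ Module.finrank ℝ (U ⊓ W : Submodule ℝ (EuclideanSpace ℝ V)) := by
    have h1 := Submodule.finrank_sup_add_finrank_inf_eq U W
    have h2 : Module.finrank ℝ (U ⊔ W : Submodule ℝ (EuclideanSpace ℝ V)) ≤ Fintype.card V := by
      have := Submodule.finrank_le (U ⊔ W : Submodule ℝ (EuclideanSpace ℝ V))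
      rwa [finrank_euclideanSpace] at this
    omega
  obtain ⟨x, hxUW, hx0⟩ : ∃ x ∈ (U ⊓ W : Submodule ℝ (EuclideanSpace ℝ V)), x ≠ 0 := by
    by_contra hc
    push_neg at hc
    have : (U ⊓ W : Submodule ℝ (EuclideanSpace ℝ V)) = ⊥ := by
      rw [Submodule.eq_bot_iff]; exact hc
    rw [this, finrank_bot] at hinf; omega
  have hxU : x ∈ U := hxUW.1
  have hvanish : ∀ j ∉ s, B.repr x j = 0 := by
    intro j hj
    refine Submodule.span_induction (p := fun z _ => B.repr z j = 0) ?_ ?_ ?_ ?_ hxU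
    · rintro _ ⟨i, rfl⟩
      rw [B.repr_self]
      have hij : (i : V) ≠ j := fun h => hj (h ▸ i.2)
      simp [EuclideanSpace.single_apply, hij, Ne.symm hij]
    · simp
    · intro a b _ _ ha hb
      rw [map_add]; simp [ha, hb]
    · intro r a _ ha
      rw [LinearIsometryEquiv.map_smul]; simp [ha]
  have hne : ∃ i ∈ s, B.repr x i ≠ 0 := by
    by_contra hc
    push_neg at hc
    apply hx0
    have : B.repr x = 0 := by
      ext i
      by_cases hi : i ∈ s
      · exact hc i hi
      · exact hvanish i hi
    simpa using B.repr.map_eq_zero_iff.mp (by exact this)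
  obtain ⟨i0, hi0s, hi0⟩ := hne
  have hQlt : (x : V → ℝ) ⬝ᵥ (A *ᵥ x) < c * ((x : V → ℝ) ⬝ᵥ x) := by
    rw [dot_mulVec_eq_sum' hA, dot_self_eq_sum' hA, Finset.mul_sum]
    rw [← Finset.sum_subset (Finset.subset_univ s)
      (fun i _ hi => by rw [hvanish i hi]; ring),
      ← Finset.sum_subset (Finset.subset_univ s)
      (fun i _ hi => by rw [hvanish i hi]; ring)]
    refine Finset.sum_lt_sum (fun i hi => ?_) ⟨i0, hi0s, ?_⟩
    · have : hA.eigenvalues i ≤ c := le_of_lt (by simpa [hs] using hi)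
      exact mul_le_mul_of_nonneg_right this (sq_nonneg _)
    · have h1 : hA.eigenvalues i0 < c := by simpa [hs] using hi0s
      exact mul_lt_mul_of_pos_right h1 (by positivity)
  exact absurd (hray x hxUW.2) (not_le.mpr hQlt)

end Spectral

/-! ### Choosability from degeneracy -/

lemma choosable_of_degenerate' {V : Type*} [Fintype V] [DecidableEq V] (G : SimpleGraph V)
    [DecidableRel G.Adj] (k : ℕ)
    (hdeg : ∀ S : Finset V, S.Nonempty → ∃ v ∈ S, ((S.erase v).filter (G.Adj v)).card ≤ k) :
    Choosable G (k + 1) := by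
  intro L hL
  suffices h : ∀ S : Finset V, ∃ c : V → ℕ, (∀ v ∈ S, c v ∈ L v) ∧
      ∀ u v, u ∈ S → v ∈ S → G.Adj u v → c u ≠ c v by
    obtain ⟨c, hc1, hc2⟩ := h Finset.univ
    exact ⟨c, fun v => hc1 v (mem_univ v), fun u v h => hc2 u v (mem_univ u) (mem_univ v) h⟩
  intro S
  induction S using Finset.strongInduction with
  | _ S ih =>
    rcases S.eq_empty_or_nonempty with rfl | hS
    · refine ⟨fun v => (L v).min' ?_, fun v hv => ?_, fun u v hu => ?_⟩ <;>
        first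
        | (exact Finset.card_pos.mp (by rw [hL]; omega))
        | exact fun v => (L v).min'_mem _
        | simp_all
    obtain ⟨v, hvS, hvdeg⟩ := hdeg S hS
    obtain ⟨c', hc1, hc2⟩ := ih (S.erase v) (Finset.erase_ssubset hvS)
    set used : Finset ℕ := ((S.erase v).filter (G.Adj v)).image c' with hused
    have hcard : used.card < (L v).card := by
      rw [hL]
      exact lt_of_le_of_lt (Finset.card_image_le.trans hvdeg) (Nat.lt_succ_self k)
    have hne : (L v \ used).Nonempty := by
      rw [← Finset.card_pos]
      have h2 := Finset.le_card_sdiff used (L v)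
      omega
    obtain ⟨a, ha⟩ := hne
    rw [Finset.mem_sdiff] at ha
    refine ⟨Function.update c' v a, ?_, ?_⟩
    · intro u hu
      rcases eq_or_ne u v with huv | huv
      · rw [huv, Function.update_self]; exact ha.1
      · rw [Function.update_of_ne huv]; exact hc1 u (Finset.mem_erase.mpr ⟨huv, hu⟩)
    · intro u w hu hw hadj
      rcases eq_or_ne u v with huv | huv <;> rcases eq_or_ne w v with hwv | hwv
      · exact absurd (huv ▸ hwv ▸ hadj) (G.irrefl)
      · subst huv
        rw [Function.update_self, Function.update_of_ne hwv]
        intro hcontra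
        exact ha.2 (Finset.mem_image.mpr ⟨w, Finset.mem_filter.mpr
          ⟨Finset.mem_erase.mpr ⟨hwv, hw⟩, hadj⟩, hcontra.symm⟩)
      · subst hwv
        rw [Function.update_self, Function.update_of_ne huv]
        intro hcontra
        exact ha.2 (Finset.mem_image.mpr ⟨u, Finset.mem_filter.mpr
          ⟨Finset.mem_erase.mpr ⟨huv, hu⟩, G.adj_symm hadj⟩, hcontra⟩)
      · rw [Function.update_of_ne huv, Function.update_of_ne hwv]
        exact hc2 u w (Finset.mem_erase.mpr ⟨huv, hu⟩) (Finset.mem_erase.mpr ⟨hwv, hw⟩) hadj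

/-! ### Extension of vectors along an induced embedding of C₅ -/

section Ext
variable {V : Type*} [Fintype V] [DecidableEq V] (G : SimpleGraph V) [DecidableRel G.Adj]
  (f : SimpleGraph.cycleGraph 5 ↪g G)

noncomputable def extVec (f : SimpleGraph.cycleGraph 5 ↪g G) (z : Fin 5 → ℝ) : V → ℝ :=
  Function.extend f z 0

lemma extVec_apply (z : Fin 5 → ℝ) (i : Fin 5) : extVec G f z (f i) = z i :=
  f.injective.extend_apply z 0 i

lemma extVec_not_mem (z : Fin 5 → ℝ) {v : V} (hv : ¬ ∃ i, f i = v) : extVec G f z v = 0 :=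
  Function.extend_apply' z (0 : V → ℝ) v hv

lemma extVec_dot_self (z : Fin 5 → ℝ) :
    extVec G f z ⬝ᵥ extVec G f z = z ⬝ᵥ z := by
  unfold dotProduct
  rw [← Finset.sum_subset (Finset.subset_univ (Finset.univ.image f))]
  · rw [Finset.sum_image (fun i _ j _ h => f.injective h)]
    exact Finset.sum_congr rfl fun i _ => by rw [extVec_apply]
  · intro v _ hv
    rw [extVec_not_mem G f z (by simpa [Finset.mem_image] using hv)]
    ring

lemma extVec_dot_mulVec (z : Fin 5 → ℝ) :
    extVec G f z ⬝ᵥ (G.adjMatrix ℝ *ᵥ extVec G f z) =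
      z ⬝ᵥ ((SimpleGraph.cycleGraph 5).adjMatrix ℝ *ᵥ z) := by
  unfold dotProduct Matrix.mulVec
  rw [← Finset.sum_subset (Finset.subset_univ (Finset.univ.image f))]
  · rw [Finset.sum_image (fun i _ j _ h => f.injective h)]
    refine Finset.sum_congr rfl fun i _ => ?_
    rw [extVec_apply]
    congr 1
    unfold dotProduct
    rw [← Finset.sum_subset (Finset.subset_univ (Finset.univ.image f))]
    · rw [Finset.sum_image (fun i _ j _ h => f.injective h)]
      refine Finset.sum_congr rfl fun j _ => ?_
      rw [extVec_apply]
      congr 1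
      simp only [SimpleGraph.adjMatrix_apply]
      exact if_congr f.map_adj_iff rfl rfl
    · intro v _ hv
      rw [extVec_not_mem G f z (by simpa [Finset.mem_image] using hv)]
      ring
  · intro v _ hv
    rw [extVec_not_mem G f z (by simpa [Finset.mem_image] using hv)]
    ring

lemma extVec_add (z w : Fin 5 → ℝ) :
    extVec G f (z + w) = extVec G f z + extVec G f w := by
  funext v
  by_cases hv : ∃ i, f i = v
  · obtain ⟨i, rfl⟩ := hv
    simp [extVec_apply]
  · simp [extVec_not_mem G f _ hv]

lemma extVec_smul (r : ℝ) (z : Fin 5 → ℝ) :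
    extVec G f (r • z) = r • extVec G f z := by
  funext v
  by_cases hv : ∃ i, f i = v
  · obtain ⟨i, rfl⟩ := hv
    simp [extVec_apply]
  · simp [extVec_not_mem G f _ hv]

end Ext

/-! ### Quadratic form computations on C₅ -/

noncomputable def cv : Fin 3 → (Fin 5 → ℝ) :=
  ![![1,1,1,1,1], ![16,5,-13,-13,5], ![0,5,3,-3,-5]]

lemma c5_quad (z : Fin 5 → ℝ) :
    z ⬝ᵥ ((SimpleGraph.cycleGraph 5).adjMatrix ℝ *ᵥ z) =
      2*(z 0 * z 1 + z 1 * z 2 + z 2 * z 3 + z 3 * z 4 + z 4 * z 0) := by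
  have h : ∀ i j : Fin 5, (SimpleGraph.cycleGraph 5).adjMatrix ℝ i j
      = if (i - j).val = 1 ∨ (j - i).val = 1 then 1 else 0 := by
    intro i j
    simp [SimpleGraph.adjMatrix_apply, SimpleGraph.cycleGraph_adj']
  unfold dotProduct Matrix.mulVec dotProduct
  simp only [h, Fin.sum_univ_five]
  norm_num (config := {decide := true}) [show ((-2:Fin 5):ℕ) = 3 by decide, show ((-3:Fin 5):ℕ) = 2 by decide,
    show ((-4:Fin 5):ℕ) = 1 by decide, show ((3:Fin 5):ℕ) = 3 by decide,
    show ((4:Fin 5):ℕ) = 4 by decide]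
  ring

noncomputable def zc (a b d : ℝ) : Fin 5 → ℝ := a • cv 0 + b • cv 1 + d • cv 2

lemma zc_apply (a b d : ℝ) : zc a b d 0 = a + 16*b ∧ zc a b d 1 = a + 5*b + 5*d ∧
    zc a b d 2 = a - 13*b + 3*d ∧ zc a b d 3 = a - 13*b - 3*d ∧ zc a b d 4 = a + 5*b - 5*d := by
  refine ⟨?_, ?_, ?_, ?_, ?_⟩ <;> (simp [zc, cv]; ring)

lemma zc_dot_self (a b d : ℝ) : zc a b d ⬝ᵥ zc a b d = 5*a^2 + 644*b^2 + 68*d^2 := by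
  obtain ⟨h0, h1, h2, h3, h4⟩ := zc_apply a b d
  unfold dotProduct
  rw [Fin.sum_univ_five, h0, h1, h2, h3, h4]
  ring

lemma zc_quad (a b d : ℝ) :
    zc a b d ⬝ᵥ ((SimpleGraph.cycleGraph 5).adjMatrix ℝ *ᵥ zc a b d) =
      10*a^2 + 398*b^2 + 42*d^2 := by
  obtain ⟨h0, h1, h2, h3, h4⟩ := zc_apply a b d
  rw [c5_quad, h0, h1, h2, h3, h4]
  ring

lemma zc_ray (a b d : ℝ) :
    (11/20) * (zc a b d ⬝ᵥ zc a b d) ≤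
      zc a b d ⬝ᵥ ((SimpleGraph.cycleGraph 5).adjMatrix ℝ *ᵥ zc a b d) := by
  rw [zc_dot_self, zc_quad]
  nlinarith [sq_nonneg a, sq_nonneg b, sq_nonneg d]

lemma zc_eq_zero {a b d : ℝ} (h : zc a b d = 0) : a = 0 ∧ b = 0 ∧ d = 0 := by
  obtain ⟨h0, h1, h2, h3, h4⟩ := zc_apply a b d
  rw [h] at h0 h1 h2
  simp only [Pi.zero_apply] at h0 h1 h2
  refine ⟨by linarith, by linarith, by linarith⟩

/-- If `G` contains an induced `C₅`, then `E(G) > 2 ch(G)`. -/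
theorem stmt16 {V : Type*} [Fintype V] [DecidableEq V] (G : SimpleGraph V)
    (f : SimpleGraph.cycleGraph 5 ↪g G) : energy G > 2 * (choiceNumber G : ℝ) := by
  classical
  have hA : (G.adjMatrix ℝ).IsHermitian := by
    rw [Matrix.IsHermitian, Matrix.conjTranspose_eq_transpose_of_trivial]
    exact G.isSymm_adjMatrix
  set μ : V → ℝ := hA.eigenvalues with hμ
  have henergy : energy G = ∑ i, |μ i| := rfl
  have hne : Nonempty V := ⟨f 0⟩
  obtain ⟨i0, -, hi0⟩ := Finset.exists_max_image (Finset.univ : Finset V) μ Finset.univ_nonempty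
  set M : ℝ := μ i0 with hM
  have hMub : ∀ i, μ i ≤ M := fun i => hi0 i (mem_univ i)
  -- the three extended vectors
  set y : Fin 3 → EuclideanSpace ℝ V := fun j => WithLp.toLp 2 (extVec G f (cv j)) with hy
  have hsum : ∀ g : Fin 3 → ℝ,
      (∑ j, g j • y j : EuclideanSpace ℝ V) = extVec G f (zc (g 0) (g 1) (g 2)) := by
    intro g
    rw [Fin.sum_univ_three]
    simp only [WithLp.ofLp_add, WithLp.ofLp_smul, hy]
    rw [← extVec_smul, ← extVec_smul, ← extVec_smul, ← extVec_add, ← extVec_add]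
    rfl
  have hylin : LinearIndependent ℝ y := by
    rw [Fintype.linearIndependent_iff]
    intro g hg
    replace hg := congrArg WithLp.ofLp hg
    rw [hsum g] at hg
    have hz : zc (g 0) (g 1) (g 2) = 0 := by
      funext i
      have := congrFun hg (f i)
      rwa [extVec_apply] at this
    obtain ⟨h1, h2, h3⟩ := zc_eq_zero hz
    intro j; fin_cases j <;> assumption
  have hray : ∀ x ∈ Submodule.span ℝ (Set.range y),
      (11/20 : ℝ) * ((x : V → ℝ) ⬝ᵥ x) ≤ (x : V → ℝ) ⬝ᵥ (G.adjMatrix ℝ *ᵥ x) := by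
    intro x hx
    rw [Submodule.mem_span_range_iff_exists_fun] at hx
    obtain ⟨g, hg⟩ := hx
    rw [← hg, hsum g]
    rw [extVec_dot_self, extVec_dot_mulVec]
    exact zc_ray _ _ _
  have hcount := three_eigenvalues_ge' hA y hylin hray
  set T : Finset V := Finset.univ.filter (fun i => (11/20 : ℝ) ≤ μ i) with hT
  have hi0T : i0 ∈ T := by
    obtain ⟨j0, hj0⟩ := Finset.card_pos.mp (by omega : 0 < T.card)
    have : (11/20 : ℝ) ≤ μ j0 := by simpa [hT] using hj0
    simp only [hT, Finset.mem_filter, Finset.mem_univ, true_and]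
    exact le_trans this (hMub j0)
  have hM11 : (11/20 : ℝ) ≤ M := by simpa [hT] using hi0T
  -- choosability: degeneracy bound
  have hdeg : ∀ S : Finset V, S.Nonempty →
      ∃ v ∈ S, ((S.erase v).filter (G.Adj v)).card ≤ ⌊M⌋₊ := by
    intro S hS
    by_contra hcon
    push_neg at hcon
    have hcon' : ∀ v ∈ S, M < (((S.erase v).filter (G.Adj v)).card : ℝ) := by
      intro v hv
      have := hcon v hv
      have h2 : ⌊M⌋₊ + 1 ≤ ((S.erase v).filter (G.Adj v)).card := this
      have := Nat.lt_floor_add_one M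
      calc M < (⌊M⌋₊ : ℝ) + 1 := Nat.lt_floor_add_one M
        _ ≤ _ := by exact_mod_cast h2
    set x : EuclideanSpace ℝ V := WithLp.toLp 2 (fun v => if v ∈ S then (1:ℝ) else 0 : V → ℝ) with hx
    have hx2 : (x : V → ℝ) ⬝ᵥ x = (S.card : ℝ) := by
      unfold dotProduct
      rw [← Finset.sum_subset (Finset.subset_univ S)
        (fun v _ hv => by simp [hx, hv])]
      rw [Finset.card_eq_sum_ones S]
      push_cast
      exact Finset.sum_congr rfl fun v hv => by simp [hx, hv]
    have hQ : (x : V → ℝ) ⬝ᵥ (G.adjMatrix ℝ *ᵥ x) =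
        ∑ u ∈ S, (((S.erase u).filter (G.Adj u)).card : ℝ) := by
      unfold dotProduct Matrix.mulVec dotProduct
      rw [← Finset.sum_subset (Finset.subset_univ S)
        (fun v _ hv => by simp [hx, hv])]
      refine Finset.sum_congr rfl fun u hu => ?_
      rw [show (x : V → ℝ) u = 1 by simp [hx, hu], one_mul]
      rw [← Finset.sum_subset (Finset.subset_univ S)
        (fun v _ hv => by simp [hx, hv])]
      have hfe : (S.erase u).filter (G.Adj u) = S.filter (G.Adj u) := by
        ext w
        simp only [Finset.mem_filter, Finset.mem_erase]
        constructor
        · rintro ⟨⟨-, hw⟩, ha⟩; exact ⟨hw, ha⟩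
        · rintro ⟨hw, ha⟩; exact ⟨⟨fun h => G.irrefl (h ▸ ha), hw⟩, ha⟩
      rw [hfe]
      rw [Finset.card_filter]
      push_cast
      refine Finset.sum_congr rfl fun w hw => ?_
      rw [show (x : V → ℝ) w = 1 by simp [hx, hw], mul_one]
      simp [SimpleGraph.adjMatrix_apply]
    have hlt : M * (S.card : ℝ) < (x : V → ℝ) ⬝ᵥ (G.adjMatrix ℝ *ᵥ x) := by
      rw [hQ]
      calc M * (S.card : ℝ) = ∑ _u ∈ S, M := by
            rw [Finset.sum_const, nsmul_eq_mul, mul_comm]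
        _ < _ := Finset.sum_lt_sum_of_nonempty hS hcon'
    have hle := rayleigh_le' hA hMub x
    rw [hx2] at hle
    linarith
  have hchoos : Choosable G (⌊M⌋₊ + 1) := choosable_of_degenerate' G _ hdeg
  have hch : choiceNumber G ≤ ⌊M⌋₊ + 1 := Nat.sInf_le hchoos
  have hchR : (choiceNumber G : ℝ) ≤ M + 1 := by
    have h1 : (choiceNumber G : ℝ) ≤ (⌊M⌋₊ : ℝ) + 1 := by exact_mod_cast hch
    have h2 : (⌊M⌋₊ : ℝ) ≤ M := Nat.floor_le (le_trans (by norm_num) hM11)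
    linarith
  -- energy lower bound
  have htrace : ∑ i, μ i = 0 := by
    rw [← sum_eigenvalues_eq_trace' hA]
    simp
  have henergy2 : energy G = ∑ i, (|μ i| + μ i) := by
    rw [henergy, Finset.sum_add_distrib, htrace, add_zero]
  -- pick three indices
  obtain ⟨j, hj⟩ : (T.erase i0).Nonempty := by
    rw [← Finset.card_pos, Finset.card_erase_of_mem hi0T]; omega
  obtain ⟨k, hk⟩ : ((T.erase i0).erase j).Nonempty := by
    rw [← Finset.card_pos, Finset.card_erase_of_mem hj,
      Finset.card_erase_of_mem hi0T]; omega
  have hjT : j ∈ T := Finset.mem_of_mem_erase hj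
  have hkT : k ∈ T := Finset.mem_of_mem_erase (Finset.mem_of_mem_erase hk)
  have hji0 : j ≠ i0 := Finset.ne_of_mem_erase hj
  have hkj : k ≠ j := Finset.ne_of_mem_erase hk
  have hki0 : k ≠ i0 := Finset.ne_of_mem_erase (Finset.mem_of_mem_erase hk)
  have hμj : (11/20 : ℝ) ≤ μ j := by simpa [hT] using hjT
  have hμk : (11/20 : ℝ) ≤ μ k := by simpa [hT] using hkT
  have hsub : ({i0, j, k} : Finset V) ⊆ Finset.univ := Finset.subset_univ _
  have hsum3 : ∑ i ∈ ({i0, j, k} : Finset V), (|μ i| + μ i) ≤ ∑ i, (|μ i| + μ i) :=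
    Finset.sum_le_sum_of_subset_of_nonneg hsub
      (fun i _ _ => by have := neg_abs_le (μ i); linarith)
  have heval : ∑ i ∈ ({i0, j, k} : Finset V), (|μ i| + μ i) =
      (|μ i0| + μ i0) + (|μ j| + μ j) + (|μ k| + μ k) := by
    rw [Finset.sum_insert (by simp [Ne.symm hji0, Ne.symm hki0]),
      Finset.sum_insert (by simp [Ne.symm hkj]), Finset.sum_singleton]
    ring
  have habs : ∀ r : ℝ, 2 * r ≤ |r| + r := fun r => by
    have := le_abs_self r; linarith
  have hfinal : 2 * M + 4 * (11/20 : ℝ) ≤ energy G := by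
    rw [henergy2]
    calc 2 * M + 4 * (11/20 : ℝ) ≤ 2 * μ i0 + 2 * μ j + 2 * μ k := by
          rw [← hM]; linarith
      _ ≤ (|μ i0| + μ i0) + (|μ j| + μ j) + (|μ k| + μ k) := by
          have := habs (μ i0); have := habs (μ j); have := habs (μ k); linarith
      _ = ∑ i ∈ ({i0, j, k} : Finset V), (|μ i| + μ i) := heval.symm
      _ ≤ _ := hsum3
  have : 2 * (choiceNumber G : ℝ) ≤ 2 * M + 2 := by linarith
  linarith
end
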